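/- If h : ℝ → ℝ is differentiable with bounded derivative, then the solution y of the Stein equation satisfies ‖y'‖_∞ ≤ 4(1−ψ)^{−1/2}·‖h'‖_∞. -/

import Mathlib

open MeasureTheory ProbabilityTheory Real Set

noncomputable section

/-- `h̄_ψ = E h(N)` for `N ~ N(0, (1-ψ)⁻¹)`. -/
def gaussMean (ψ : ℝ) (h : ℝ → ℝ) : ℝ :=
  ∫ x, h x ∂(gaussianReal 0 (Real.toNNReal (1 - ψ)⁻¹))

/-- The bounded solution `y` of the Stein equation
`y'(x) - (1-ψ) x y(x) = h(x) - h̄_ψ`, given explicitly by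
`y(x) = -e^{(1-ψ)x²/2} ∫_x^∞ e^{-(1-ψ)t²/2} (h(t) - h̄_ψ) dt`. -/
def steinSol (ψ : ℝ) (h : ℝ → ℝ) (x : ℝ) : ℝ :=
  - Real.exp ((1 - ψ) * x ^ 2 / 2) *
      ∫ t in Set.Ioi x, Real.exp (-((1 - ψ) * t ^ 2 / 2)) * (h t - gaussMean ψ h)

namespace SteinAux

/-- Abstract form of the Stein solution. -/
def Y (a : ℝ) (f : ℝ → ℝ) (x : ℝ) : ℝ :=
  - Real.exp (a * x ^ 2 / 2) * ∫ t in Set.Ioi x, Real.exp (-(a * t ^ 2 / 2)) * f t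

lemma exp_eq (a t : ℝ) : Real.exp (-(a * t ^ 2 / 2)) = Real.exp (-(a/2) * t ^ 2) := by
  ring_nf

lemma int_w {a : ℝ} (ha : 0 < a) :
    Integrable (fun t : ℝ => Real.exp (-(a * t ^ 2 / 2))) := by
  simp_rw [exp_eq]
  exact integrable_exp_neg_mul_sq (by linarith)

lemma int_tw {a : ℝ} (ha : 0 < a) :
    Integrable (fun t : ℝ => t * Real.exp (-(a * t ^ 2 / 2))) := by
  simp_rw [exp_eq]
  exact integrable_mul_exp_neg_mul_sq (by linarith)

lemma int_abs_tw {a : ℝ} (ha : 0 < a) :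
    Integrable (fun t : ℝ => |t| * Real.exp (-(a * t ^ 2 / 2))) := by
  have := (int_tw ha).abs
  simpa [abs_mul, abs_of_pos (Real.exp_pos _)] using this

lemma lip_nonneg {f : ℝ → ℝ} {C : ℝ} (hLip : ∀ s t : ℝ, |f s - f t| ≤ C * |s - t|) :
    0 ≤ C := by
  have h0 := hLip 1 0
  have h1 := abs_nonneg (f 1 - f 0)
  simp at h0
  linarith

lemma int_wf {a : ℝ} (ha : 0 < a) {f : ℝ → ℝ} {C : ℝ} (hf : Continuous f)
    (hLip : ∀ s t, |f s - f t| ≤ C * |s - t|) :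
    Integrable (fun t : ℝ => Real.exp (-(a * t ^ 2 / 2)) * f t) := by
  have hC : 0 ≤ C := lip_nonneg hLip
  have hmaj : Integrable (fun t : ℝ =>
      |f 0| * Real.exp (-(a * t ^ 2 / 2)) + C * (|t| * Real.exp (-(a * t ^ 2 / 2)))) :=
    ((int_w ha).const_mul _).add ((int_abs_tw ha).const_mul _)
  refine hmaj.mono ?_ ?_
  · exact (Continuous.mul (by continuity) hf).aestronglyMeasurable
  refine Filter.Eventually.of_forall fun t => ?_
  have h1 : |f t| ≤ |f 0| + C * |t| := by
    have h3 := hLip t 0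
    have h2 : |f t| - |f 0| ≤ |f t - f 0| := abs_sub_abs_le_abs_sub _ _
    simp only [sub_zero] at h3
    linarith
  have hw : 0 ≤ Real.exp (-(a * t ^ 2 / 2)) := (Real.exp_pos _).le
  have hrhs : 0 ≤ |f 0| * Real.exp (-(a * t ^ 2 / 2)) + C * (|t| * Real.exp (-(a * t ^ 2 / 2))) := by
    positivity
  rw [Real.norm_eq_abs, Real.norm_eq_abs, abs_mul, abs_of_nonneg hw, abs_of_nonneg hrhs]
  nlinarith [abs_nonneg (f t), abs_nonneg t, abs_nonneg (f 0)]

lemma I1 {a : ℝ} (ha : 0 < a) (x : ℝ) :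
    ∫ t in Ioi x, t * Real.exp (-(a * t ^ 2 / 2)) = Real.exp (-(a * x ^ 2 / 2)) / a := by
  have hderiv : ∀ t ∈ Ioi x, HasDerivAt (fun t => -Real.exp (-(a * t ^ 2 / 2)) / a)
      (t * Real.exp (-(a * t ^ 2 / 2))) t := by
    intro t _
    have h1 : HasDerivAt (fun t : ℝ => -(a * t ^ 2 / 2)) (-(a * t)) t := by
      have h2 : HasDerivAt (fun t : ℝ => t ^ 2) (2 * t) t := by
        simpa using (hasDerivAt_pow 2 t)
      have := ((h2.const_mul a).div_const 2).neg
      exact this.congr_deriv (by ring)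
    have := ((h1.exp).neg.div_const a)
    exact this.congr_deriv (by field_simp)
  have hcont : ContinuousWithinAt (fun t => -Real.exp (-(a * t ^ 2 / 2)) / a) (Ici x) x :=
    (Continuous.continuousWithinAt (by continuity))
  have htend : Filter.Tendsto (fun t => -Real.exp (-(a * t ^ 2 / 2)) / a)
      Filter.atTop (nhds 0) := by
    have h1 : Filter.Tendsto (fun t : ℝ => Real.exp (-(a/2) * t ^ 2)) Filter.atTop (nhds 0) :=
      Real.tendsto_exp_atBot.comp
        ((Filter.tendsto_pow_atTop two_ne_zero).const_mul_atTop_of_neg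
          (neg_lt_zero.2 (by linarith)))
    have h2 := (h1.neg.div_const a)
    simp only [neg_zero, zero_div] at h2
    refine h2.congr fun t => ?_
    rw [exp_eq]
  have := integral_Ioi_of_hasDerivAt_of_tendsto hcont hderiv ((int_tw ha).integrableOn) htend
  rw [this]
  field_simp
  ring

lemma tendsto_tw {a : ℝ} (ha : 0 < a) :
    Filter.Tendsto (fun t : ℝ => t * Real.exp (-(a * t ^ 2 / 2))) Filter.atTop (nhds 0) := by
  have h0 := tendsto_rpow_abs_mul_exp_neg_mul_sq_cocompact (show 0 < a/2 by linarith) 1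
  have h1 : Filter.Tendsto (fun t : ℝ => |t| ^ (1:ℝ) * Real.exp (-(a/2) * t ^ 2))
      Filter.atTop (nhds 0) := h0.mono_left _root_.atTop_le_cocompact
  refine squeeze_zero_norm' ?_ h1
  filter_upwards with t
  rw [Real.norm_eq_abs, abs_mul, abs_of_pos (Real.exp_pos _), Real.rpow_one, exp_eq]

lemma mills {a : ℝ} (ha : 0 < a) (x : ℝ) (hx : 0 ≤ x) :
    x * Real.exp (-(a * x ^ 2 / 2)) / (a * x ^ 2 + 1)
      ≤ ∫ t in Ioi x, Real.exp (-(a * t ^ 2 / 2)) := by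
  set G : ℝ → ℝ := fun t => t * Real.exp (-(a * t ^ 2 / 2)) / (a * t ^ 2 + 1) with hG
  set G' : ℝ → ℝ := fun t =>
    Real.exp (-(a * t ^ 2 / 2)) * (2 / (a * t ^ 2 + 1) ^ 2 - 1) with hG'
  have hq : ∀ t : ℝ, (0:ℝ) < a * t ^ 2 + 1 := fun t => by positivity
  have hderiv : ∀ t : ℝ, HasDerivAt G (G' t) t := by
    intro t
    have h2 : HasDerivAt (fun t : ℝ => -(a * t ^ 2 / 2)) (-(a * t)) t := by
      have h3 : HasDerivAt (fun t : ℝ => t ^ 2) (2 * t) t := by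
        simpa using (hasDerivAt_pow 2 t)
      have := ((h3.const_mul a).div_const 2).neg
      exact this.congr_deriv (by ring)
    have hnum : HasDerivAt (fun t => t * Real.exp (-(a * t ^ 2 / 2)))
        (Real.exp (-(a * t ^ 2 / 2)) + t * (Real.exp (-(a * t ^ 2 / 2)) * (-(a * t)))) t := by
      exact ((hasDerivAt_id t).mul (h2.exp)).congr_deriv (by simp)
    have hden : HasDerivAt (fun t : ℝ => a * t ^ 2 + 1) (a * (2 * t)) t := by
      have h3 : HasDerivAt (fun t : ℝ => t ^ 2) (2 * t) t := by
        simpa using (hasDerivAt_pow 2 t)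
      simpa using (h3.const_mul a).add_const 1
    have hd := hnum.div hden (ne_of_gt (hq t))
    have heq : G' t = ((Real.exp (-(a * t ^ 2 / 2)) + t * (Real.exp (-(a * t ^ 2 / 2)) * (-(a * t))))
        * (a * t ^ 2 + 1) - t * Real.exp (-(a * t ^ 2 / 2)) * (a * (2 * t))) / (a * t ^ 2 + 1) ^ 2 := by
      rw [hG']
      have hqne : (a * t ^ 2 + 1) ≠ 0 := (hq t).ne'
      field_simp
      ring
    rw [heq]
    exact hd
  have hintG' : IntegrableOn G' (Ioi x) := by
    refine Integrable.integrableOn ?_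
    refine (int_w ha).mono ?_ (Filter.Eventually.of_forall fun t => ?_)
    · exact Continuous.aestronglyMeasurable (by
        apply Continuous.mul (by continuity)
        apply Continuous.sub ?_ continuous_const
        exact Continuous.div continuous_const (by continuity) fun t => by positivity)
    · have h1 : (1:ℝ) ≤ (a * t ^ 2 + 1) ^ 2 := by nlinarith [sq_nonneg (a * t ^ 2)]
      have h2 : 0 < (a * t ^ 2 + 1) ^ 2 := by positivity
      have h3 : 2 / (a * t ^ 2 + 1) ^ 2 ≤ 2 := by
        rw [div_le_iff₀ h2]; nlinarith
      have h4 : 0 ≤ 2 / (a * t ^ 2 + 1) ^ 2 := by positivity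
      have habs : |2 / (a * t ^ 2 + 1) ^ 2 - 1| ≤ 1 := abs_le.2 ⟨by linarith, by linarith⟩
      have hexp := (Real.exp_pos (-(a * t ^ 2 / 2))).le
      simp only [Real.norm_eq_abs, hG', abs_mul, abs_of_nonneg hexp]
      nlinarith [abs_nonneg (2 / (a * t ^ 2 + 1) ^ 2 - 1)]
  have htendG : Filter.Tendsto G Filter.atTop (nhds 0) := by
    refine squeeze_zero_norm' ?_ (tendsto_tw ha)
    filter_upwards [Filter.eventually_ge_atTop (0:ℝ)] with t ht
    have hwpos := (Real.exp_pos (-(a * t ^ 2 / 2))).le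
    have h5 : 0 ≤ G t := by rw [hG]; positivity
    rw [Real.norm_eq_abs, abs_of_nonneg h5, hG]
    rw [div_le_iff₀ (hq t)]
    nlinarith [mul_nonneg (mul_nonneg ht hwpos) (mul_nonneg ha.le (sq_nonneg t))]
  have hG'eq : ∫ t in Ioi x, -G' t = G x := by
    have hcontG : Continuous G := by
      apply Continuous.div (by continuity) (by continuity)
      exact fun t => ne_of_gt (hq t)
    have h2 : ∫ t in Ioi x, G' t = 0 - G x :=
      integral_Ioi_of_hasDerivAt_of_tendsto hcontG.continuousWithinAt
        (fun t _ => hderiv t) hintG' htendG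
    rw [integral_neg, h2]; ring
  have hmono : ∀ t ∈ Ioi x, -G' t ≤ Real.exp (-(a * t ^ 2 / 2)) := by
    intro t _
    have h2 : 0 < (a * t ^ 2 + 1) ^ 2 := by positivity
    have hexp := (Real.exp_pos (-(a * t ^ 2 / 2))).le
    have h6 : -(2 / (a * t ^ 2 + 1) ^ 2 - 1) ≤ 1 := by
      have : 0 < 2 / (a * t ^ 2 + 1) ^ 2 := by positivity
      linarith
    calc -G' t = Real.exp (-(a * t ^ 2 / 2)) * (-(2 / (a * t ^ 2 + 1) ^ 2 - 1)) := by
          rw [hG']; ring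
      _ ≤ Real.exp (-(a * t ^ 2 / 2)) * 1 := mul_le_mul_of_nonneg_left h6 hexp
      _ = _ := mul_one _
  calc x * Real.exp (-(a * x ^ 2 / 2)) / (a * x ^ 2 + 1) = G x := rfl
    _ = ∫ t in Ioi x, -G' t := hG'eq.symm
    _ ≤ ∫ t in Ioi x, Real.exp (-(a * t ^ 2 / 2)) :=
        setIntegral_mono_on hintG'.neg ((int_w ha).integrableOn) measurableSet_Ioi hmono

lemma hasDerivAt_Y {a : ℝ} {f : ℝ → ℝ} (hf : Continuous f)
    (hint : Integrable (fun t => Real.exp (-(a * t ^ 2 / 2)) * f t)) (x : ℝ) :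
    HasDerivAt (Y a f) (a * x * Y a f x + f x) x := by
  set g : ℝ → ℝ := fun t => Real.exp (-(a * t ^ 2 / 2)) * f t with hg
  have hgc : Continuous g := Continuous.mul (by continuity) hf
  have hFeq : ∀ u : ℝ, (∫ t in Ioi u, g t)
      = ((∫ t, g t) - ∫ t in Iic 0, g t) - ∫ t in (0:ℝ)..u, g t := by
    intro u
    rw [← intervalIntegral.integral_Iic_sub_Iic hint.integrableOn hint.integrableOn]
    have h4 := intervalIntegral.integral_Iic_add_Ioi (μ := volume) (b := u) (f := g)
      hint.integrableOn hint.integrableOn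
    linarith
  have hI : HasDerivAt (fun u => ∫ t in (0:ℝ)..u, g t) (g x) x :=
    intervalIntegral.integral_hasDerivAt_right hint.intervalIntegrable
      (hgc.stronglyMeasurableAtFilter _ _) hgc.continuousAt
  have hF : HasDerivAt (fun u => ∫ t in Ioi u, g t) (-(g x)) x := by
    have h1 : HasDerivAt (fun u => ((∫ t, g t) - ∫ t in Iic 0, g t) - ∫ t in (0:ℝ)..u, g t)
        (-(g x)) x := by
      exact ((hasDerivAt_const x ((∫ t, g t) - ∫ t in Iic 0, g t)).sub hI).congr_deriv (by ring)
    exact h1.congr_of_eventuallyEq (Filter.Eventually.of_forall hFeq)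
  have hE : HasDerivAt (fun u : ℝ => Real.exp (a * u ^ 2 / 2))
      (a * x * Real.exp (a * x ^ 2 / 2)) x := by
    have h2 : HasDerivAt (fun u : ℝ => a * u ^ 2 / 2) (a * x) x := by
      have h3 : HasDerivAt (fun u : ℝ => u ^ 2) (2 * x) x := by
        simpa using (hasDerivAt_pow 2 x)
      have := (h3.const_mul a).div_const 2
      exact this.congr_deriv (by ring)
    have := h2.exp
    convert this using 1; ring
  have hY : HasDerivAt (Y a f)
      (-(a * x * Real.exp (a * x ^ 2 / 2)) * (∫ t in Ioi x, g t)
        + (-Real.exp (a * x ^ 2 / 2)) * (-(g x))) x := hE.neg.mul hF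
  convert hY using 1
  have hEw : Real.exp (a * x ^ 2 / 2) * Real.exp (-(a * x ^ 2 / 2)) = 1 := by
    rw [← Real.exp_add]; simp
  have hfx : Real.exp (a * x ^ 2 / 2) * g x = f x := by
    rw [hg]
    calc Real.exp (a * x ^ 2 / 2) * (Real.exp (-(a * x ^ 2 / 2)) * f x)
        = (Real.exp (a * x ^ 2 / 2) * Real.exp (-(a * x ^ 2 / 2))) * f x := by ring
      _ = f x := by rw [hEw, one_mul]
  rw [Y]
  nlinarith [hfx]

lemma Sval {a : ℝ} (ha : 0 < a) :
    ∫ t : ℝ, Real.exp (-(a * t ^ 2 / 2)) = Real.sqrt (π / (a/2)) := by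
  simp_rw [exp_eq]
  exact integral_gaussian (a/2)

lemma Tval {a : ℝ} (ha : 0 < a) :
    ∫ t : ℝ, |t| * Real.exp (-(a * t ^ 2 / 2)) = 2 / a := by
  set g : ℝ → ℝ := fun t => |t| * Real.exp (-(a * t ^ 2 / 2)) with hg
  have hsplit : (∫ t in Iic (0:ℝ), g t) + (∫ t in Ioi (0:ℝ), g t) = ∫ t, g t :=
    intervalIntegral.integral_Iic_add_Ioi (int_abs_tw ha).integrableOn
      (int_abs_tw ha).integrableOn
  have hneg : (∫ t in Iic (0:ℝ), g t) = ∫ t in Ioi (0:ℝ), g t := by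
    have h1 : (∫ t in Iic (0:ℝ), g (-t)) = ∫ t in Ioi (-(0:ℝ)), g t :=
      integral_comp_neg_Iic 0 g
    have h2 : ∀ t : ℝ, g (-t) = g t := by
      intro t; rw [hg]; simp [abs_neg, neg_sq]
    simp only [h2, neg_zero] at h1
    exact h1
  have hIoi : (∫ t in Ioi (0:ℝ), g t) = 1 / a := by
    have h3 : ∀ t ∈ Ioi (0:ℝ), g t = t * Real.exp (-(a * t ^ 2 / 2)) := by
      intro t ht; rw [hg]; simp [abs_of_pos (mem_Ioi.1 ht)]
    rw [setIntegral_congr_fun measurableSet_Ioi h3, I1 ha 0]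
    norm_num
  rw [← hsplit, hneg, hIoi]; ring

lemma fbound {a : ℝ} (ha : 0 < a) {f : ℝ → ℝ} {C : ℝ} (hf : Continuous f)
    (hLip : ∀ s t, |f s - f t| ≤ C * |s - t|)
    (hzero : (∫ t, Real.exp (-(a * t ^ 2 / 2)) * f t) = 0) (x : ℝ) :
    |f x| ≤ C * |x| + C / Real.sqrt a := by
  have hC := lip_nonneg hLip
  set w : ℝ → ℝ := fun t => Real.exp (-(a * t ^ 2 / 2)) with hw
  set S : ℝ := Real.sqrt (π / (a/2)) with hS
  have hSpos : 0 < S := Real.sqrt_pos.2 (by positivity)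
  have hSval : ∫ t, w t = S := Sval ha
  have key : |f x| * S ≤ C * |x| * S + C * (2 / a) := by
    have h1 : |f x| * S = |∫ t, w t * (f x - f t)| := by
      have h2 : (∫ t, w t * (f x - f t)) = (∫ t, w t) * f x - ∫ t, w t * f t := by
        rw [show (fun t => w t * (f x - f t)) = fun t => w t * f x - w t * f t by
          funext t; ring]
        rw [integral_sub ((int_w ha).mul_const _) (int_wf ha hf hLip),
          integral_mul_const]
      rw [h2, hzero, sub_zero, hSval, abs_mul, abs_of_pos hSpos, mul_comm]
    rw [h1]
    calc |∫ t, w t * (f x - f t)| ≤ ∫ t, |w t * (f x - f t)| := by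
          simpa only [Real.norm_eq_abs] using
            norm_integral_le_integral_norm (μ := volume) (fun t => w t * (f x - f t))
      _ ≤ ∫ t, C * |x| * w t + C * (|t| * w t) := by
          refine integral_mono ?_ ?_ ?_
          · refine (Integrable.abs ?_)
            have h7 : Integrable (fun t => w t * f x - w t * f t) :=
              ((int_w ha).mul_const (f x)).sub (int_wf ha hf hLip)
            refine h7.congr ?_
            filter_upwards with t; ring
          · exact (((int_w ha).const_mul _).add ((int_abs_tw ha).const_mul _))
          · intro t
            simp only []
            have hwp := (Real.exp_pos (-(a * t ^ 2 / 2))).le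
            have h3 : |f x - f t| ≤ C * |x - t| := hLip x t
            have h4 : |x - t| ≤ |x| + |t| := abs_sub _ _
            have : |w t * (f x - f t)| = w t * |f x - f t| := by
              rw [abs_mul, abs_of_nonneg hwp]
            rw [this]
            nlinarith [mul_le_mul_of_nonneg_left h3 hwp,
              mul_le_mul_of_nonneg_left h4 (mul_nonneg hC hwp)]
      _ = C * |x| * S + C * (2 / a) := by
          rw [integral_add ((int_w ha).const_mul _) ((int_abs_tw ha).const_mul _),
            integral_const_mul, integral_const_mul, hSval, Tval ha]
  have hs : 0 < Real.sqrt a := Real.sqrt_pos.2 ha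
  have hTS : 2 / a ≤ S / Real.sqrt a := by
    have h4 : Real.sqrt (4 / a) ≤ S := by
      apply Real.sqrt_le_sqrt
      rw [div_le_div_iff₀ ha (by positivity)]
      nlinarith [Real.pi_gt_three]
    have h5 : Real.sqrt (4 / a) = 2 / Real.sqrt a := by
      rw [show (4:ℝ)/a = (2/Real.sqrt a)^2 by
        rw [div_pow]; rw [Real.sq_sqrt ha.le]; norm_num]
      exact Real.sqrt_sq (by positivity)
    have h6 : 2 / Real.sqrt a ≤ S := h5 ▸ h4
    have h7 := (div_le_div_iff_of_pos_right hs).2 h6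
    rwa [div_div, Real.mul_self_sqrt ha.le] at h7
  have hfinal : |f x| * S ≤ (C * |x| + C / Real.sqrt a) * S := by
    have h6 : C * (2/a) ≤ C / Real.sqrt a * S := by
      calc C * (2/a) ≤ C * (S / Real.sqrt a) := mul_le_mul_of_nonneg_left hTS hC
        _ = C / Real.sqrt a * S := by ring
    calc |f x| * S ≤ C * |x| * S + C * (2/a) := key
      _ ≤ C * |x| * S + C / Real.sqrt a * S := by linarith
      _ = (C * |x| + C / Real.sqrt a) * S := by ring
  exact le_of_mul_le_mul_right hfinal hSpos

lemma key {a : ℝ} (ha : 0 < a) {f : ℝ → ℝ} {C : ℝ} (hf : Continuous f)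
    (hLip : ∀ s t, |f s - f t| ≤ C * |s - t|)
    (hzero : (∫ t, Real.exp (-(a * t ^ 2 / 2)) * f t) = 0)
    {x : ℝ} (hx : 0 ≤ x) :
    |a * x * Y a f x + f x| ≤ 2 / Real.sqrt a * C := by
  have hC := lip_nonneg hLip
  have hs : 0 < Real.sqrt a := Real.sqrt_pos.2 ha
  have hs2 : Real.sqrt a ^ 2 = a := Real.sq_sqrt ha.le
  set s : ℝ := Real.sqrt a with hsdef
  set w : ℝ → ℝ := fun t => Real.exp (-(a * t ^ 2 / 2)) with hw
  set E : ℝ := Real.exp (a * x ^ 2 / 2) with hE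
  have hEpos : 0 < E := Real.exp_pos _
  have hwpos : ∀ t, 0 < w t := fun t => Real.exp_pos _
  have hEw : E * w x = 1 := by rw [hE, hw]; rw [← Real.exp_add]; simp
  set q : ℝ := a * x ^ 2 + 1 with hqdef
  have hq : 0 < q := by positivity
  set Q : ℝ := ∫ t in Ioi x, w t with hQ
  set J : ℝ := ∫ t in Ioi x, w t * f t with hJ
  set K : ℝ := ∫ t in Ioi x, w t * (f t - f x) with hK
  have hint : Integrable (fun t => w t * f t) := int_wf ha hf hLip
  have hQnonneg : 0 ≤ Q := setIntegral_nonneg measurableSet_Ioi fun t _ => (hwpos t).le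
  have hKJ : J = K + f x * Q := by
    have h1 : K = J - f x * Q := by
      rw [hK, hJ, hQ]
      rw [show (fun t => w t * (f t - f x)) = fun t => w t * f t - w t * f x by
        funext t; ring]
      rw [integral_sub hint.integrableOn (((int_w ha).mul_const (f x)).integrableOn)]
      rw [integral_mul_const, mul_comm (f x)]
    linarith
  have hYx : Y a f x = -E * J := rfl
  have hP1 : a * x * E * Q ≤ 1 := by
    rcases hx.eq_or_lt with h|hxpos
    · rw [← h]; simp
    · have hQle : Q ≤ w x / (a * x) := by
        have hmono : ∀ t ∈ Ioi x, w t ≤ (1 / x) * (t * w t) := by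
          intro t ht
          have htx : x < t := mem_Ioi.1 ht
          have h1 : 1 ≤ t / x := (one_le_div hxpos).2 htx.le
          have := mul_le_mul_of_nonneg_right h1 (hwpos t).le
          rw [one_mul] at this
          calc w t ≤ t / x * w t := this
            _ = 1 / x * (t * w t) := by ring
        have h2 : Q ≤ ∫ t in Ioi x, (1 / x) * (t * w t) := by
          refine setIntegral_mono_on (int_w ha).integrableOn ?_ measurableSet_Ioi hmono
          exact ((int_tw ha).const_mul _).integrableOn
        rw [integral_const_mul, hw, I1 ha x] at h2
        calc Q ≤ 1 / x * (Real.exp (-(a * x ^ 2 / 2)) / a) := h2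
          _ = w x / (a * x) := by rw [hw]; field_simp
      calc a * x * E * Q ≤ a * x * E * (w x / (a * x)) :=
            mul_le_mul_of_nonneg_left hQle (by positivity)
        _ = (E * w x) * ((a * x) / (a * x)) := by ring
        _ = 1 := by rw [hEw, div_self (by positivity : (a*x) ≠ 0)]; norm_num
  have hP2 : a * x ^ 2 / q ≤ a * x * E * Q := by
    have h1 := mills ha x hx
    have h2 := mul_le_mul_of_nonneg_left h1 (show 0 ≤ a * x * E by positivity)
    calc a * x ^ 2 / q = a * x ^ 2 * (E * w x) / q := by rw [hEw, mul_one]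
      _ = a * x * E * (x * w x / q) := by rw [hqdef]; ring
      _ = a * x * E * (x * Real.exp (-(a * x ^ 2 / 2)) / (a * x ^ 2 + 1)) := by
          rw [hw, hqdef]
      _ ≤ a * x * E * Q := h2
  have h1mP0 : 0 ≤ 1 - a * x * E * Q := by linarith
  have h1mP : 1 - a * x * E * Q ≤ 1 / q := by
    have : 1 - a * x ^ 2 / q = 1 / q := by
      field_simp
      rw [hqdef]; ring
    linarith
  have hKb : |K| ≤ C * (w x / a - x * Q) := by
    have hgint : IntegrableOn (fun t => w t * (f t - f x)) (Ioi x) := by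
      have h7 : Integrable (fun t => w t * f t - w t * f x) :=
        hint.sub ((int_w ha).mul_const (f x))
      refine (h7.congr ?_).integrableOn
      filter_upwards with t; ring
    have hmajint : IntegrableOn (fun t => C * (t * w t - x * w t)) (Ioi x) := by
      have h8 : Integrable (fun t => t * w t - x * w t) := by
        refine (int_tw ha).sub ?_
        have := (int_w ha).const_mul x
        refine this.congr ?_
        filter_upwards with t; ring
      exact (h8.const_mul C).integrableOn
    have hptwise : ∀ t ∈ Ioi x, |w t * (f t - f x)| ≤ C * (t * w t - x * w t) := by
      intro t ht
      have htx : x < t := mem_Ioi.1 ht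
      have hwp := (hwpos t).le
      have h3 : |f t - f x| ≤ C * |t - x| := hLip t x
      rw [abs_of_pos (by linarith : (0:ℝ) < t - x)] at h3
      have h5 : |w t * (f t - f x)| = w t * |f t - f x| := by
        rw [abs_mul, abs_of_nonneg hwp]
      rw [h5]
      calc w t * |f t - f x| ≤ w t * (C * (t - x)) := mul_le_mul_of_nonneg_left h3 hwp
        _ = C * (t * w t - x * w t) := by ring
    calc |K| ≤ ∫ t in Ioi x, |w t * (f t - f x)| := by
          simpa only [Real.norm_eq_abs] using
            norm_integral_le_integral_norm (μ := volume.restrict (Ioi x))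
              (fun t => w t * (f t - f x))
      _ ≤ ∫ t in Ioi x, C * (t * w t - x * w t) := by
          refine setIntegral_mono_on hgint.abs hmajint measurableSet_Ioi ?_
          intro t ht
          exact hptwise t ht
      _ = C * (w x / a - x * Q) := by
          rw [integral_const_mul]
          rw [integral_sub (int_tw ha).integrableOn (((int_w ha).const_mul x).integrableOn)]
          rw [integral_const_mul, hw, I1 ha x, hQ, hw]
  have hexpr : a * x * Y a f x + f x = -(a * x * E * K) + f x * (1 - a * x * E * Q) := by
    rw [hYx, hKJ]; ring
  have haxE : 0 ≤ a * x * E := by positivity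
  have hfx : |f x| ≤ C * x + C / s := by
    have := fbound ha hf hLip hzero x
    rwa [abs_of_nonneg hx] at this
  have hfx0 : 0 ≤ C * x + C / s := by positivity
  have hKstep : a * x * E * |K| ≤ C * x * (1 - a * x * E * Q) := by
    have h2 := mul_le_mul_of_nonneg_left hKb haxE
    have heq : a * x * E * (C * (w x / a - x * Q))
        = C * x * (E * w x) * (a / a) - C * x * (a * x * E * Q) := by ring
    rw [heq, hEw, div_self ha.ne', mul_one, mul_one] at h2
    linarith
  calc |a * x * Y a f x + f x|
      ≤ |a * x * E * K| + |f x * (1 - a * x * E * Q)| := by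
        rw [hexpr]
        refine (abs_add_le _ _).trans ?_
        rw [abs_neg]
    _ = a * x * E * |K| + |f x| * (1 - a * x * E * Q) := by
        rw [abs_mul (a * x * E) K, abs_mul (f x) _, abs_of_nonneg haxE, abs_of_nonneg h1mP0]
    _ ≤ C * x * (1 - a * x * E * Q) + (C * x + C / s) * (1 - a * x * E * Q) := by
        have := mul_le_mul_of_nonneg_right hfx h1mP0
        linarith
    _ ≤ C * x * (1 / q) + (C * x + C / s) * (1 / q) :=
        add_le_add (mul_le_mul_of_nonneg_left h1mP (mul_nonneg hC hx))
          (mul_le_mul_of_nonneg_left h1mP hfx0)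
    _ ≤ 2 / s * C := by
        rw [mul_one_div, mul_one_div, ← add_div, div_le_iff₀ hq]
        have hCs : C / s * s = C := by field_simp
        have hq2 : q = s ^ 2 * x ^ 2 + 1 := by rw [hqdef, hs2]
        have expand : 2 / s * C * q = 2 * (C / s) * (s^2 * x^2) + 2 * (C / s) := by
          rw [hq2]; ring
        have hCsnn : 0 ≤ C / s := by positivity
        nlinarith [mul_nonneg hCsnn (sq_nonneg (s * x - 1)), mul_nonneg hCsnn (sq_nonneg (s * x)),
          hCs]

lemma zeroMean {ψ : ℝ} (hψ1 : ψ < 1) {h : ℝ → ℝ} {C : ℝ} (hcont : Continuous h)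
    (hLip : ∀ s t, |h s - h t| ≤ C * |s - t|) :
    ∫ t, Real.exp (-((1 - ψ) * t ^ 2 / 2)) * (h t - gaussMean ψ h) = 0 := by
  set a : ℝ := 1 - ψ with hadef
  have ha : 0 < a := by rw [hadef]; linarith
  set v : NNReal := Real.toNNReal a⁻¹ with hv
  have hvne : v ≠ 0 := by
    rw [hv]
    simp only [ne_eq, Real.toNNReal_eq_zero, not_le]
    positivity
  have hvr : (v : ℝ) = a⁻¹ := Real.coe_toNNReal _ (by positivity)
  set S : ℝ := Real.sqrt (2 * π * v) with hS
  have hSpos : 0 < S := by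
    rw [hS]
    apply Real.sqrt_pos.2
    have : (0:ℝ) < (v:ℝ) := by rw [hvr]; positivity
    positivity
  have hpdf : ∀ t : ℝ, gaussianPDFReal 0 v t = S⁻¹ * Real.exp (-(a * t ^ 2 / 2)) := by
    intro t
    rw [gaussianPDFReal, hS]
    congr 1
    rw [hvr, sub_zero]
    congr 1
    field_simp
  have hmean : gaussMean ψ h = ∫ t, gaussianPDFReal 0 v t * h t := by
    rw [gaussMean]
    have hgr : gaussianReal 0 (Real.toNNReal (1 - ψ)⁻¹) = gaussianReal 0 v := by rw [hv, hadef]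
    rw [hgr, gaussianReal_of_var_ne_zero 0 hvne]
    have hd : (gaussianPDF 0 v) = fun t => ((Real.toNNReal (gaussianPDFReal 0 v t) : NNReal) : ENNReal) := by
      funext t; rfl
    rw [hd]
    rw [integral_withDensity_eq_integral_smul
      ((measurable_gaussianPDFReal 0 v).real_toNNReal) h]
    congr 1
    funext t
    rw [NNReal.smul_def, smul_eq_mul, Real.coe_toNNReal _ (gaussianPDFReal_nonneg 0 v t)]
  have hwS : ∫ t, Real.exp (-(a * t ^ 2 / 2)) = S := by
    rw [Sval ha, hS, hvr]
    congr 1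
    field_simp
  have hintwh : Integrable (fun t => Real.exp (-(a * t ^ 2 / 2)) * h t) :=
    int_wf ha hcont hLip
  have hmean2 : gaussMean ψ h = S⁻¹ * ∫ t, Real.exp (-(a * t ^ 2 / 2)) * h t := by
    rw [hmean, ← integral_const_mul]
    congr 1
    funext t
    rw [hpdf t]
    ring
  have hsplit : ∫ t, Real.exp (-(a * t ^ 2 / 2)) * (h t - gaussMean ψ h)
      = (∫ t, Real.exp (-(a * t ^ 2 / 2)) * h t)
        - (∫ t, Real.exp (-(a * t ^ 2 / 2))) * gaussMean ψ h := by
    rw [show (fun t => Real.exp (-(a * t ^ 2 / 2)) * (h t - gaussMean ψ h))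
        = fun t => Real.exp (-(a * t ^ 2 / 2)) * h t
          - Real.exp (-(a * t ^ 2 / 2)) * gaussMean ψ h by funext t; ring]
    rw [integral_sub hintwh ((int_w ha).mul_const _), integral_mul_const]
  have hrw : ∫ t, Real.exp (-((1 - ψ) * t ^ 2 / 2)) * (h t - gaussMean ψ h)
      = ∫ t, Real.exp (-(a * t ^ 2 / 2)) * (h t - gaussMean ψ h) := by rw [hadef]
  rw [hrw, hsplit, hwS, hmean2]
  field_simp
  ring

end SteinAux

open SteinAux in
theorem stmt13 (ψ : ℝ) (hψ0 : 0 ≤ ψ) (hψ1 : ψ < 1) (h : ℝ → ℝ) (hdiff : Differentiable ℝ h) (C : ℝ) (hC : ∀ x, |deriv h x| ≤ C) :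
    ∀ x : ℝ, |deriv (steinSol ψ h) x| ≤ 4 / Real.sqrt (1 - ψ) * C := by
  intro x
  set a : ℝ := 1 - ψ with hadef
  have ha : 0 < a := by rw [hadef]; linarith
  have hs : 0 < Real.sqrt a := Real.sqrt_pos.2 ha
  have hC0 : 0 ≤ C := le_trans (abs_nonneg _) (hC 0)
  -- h is Lipschitz with constant C
  have hlipW : LipschitzWith C.toNNReal h := by
    refine lipschitzWith_of_nnnorm_deriv_le hdiff fun y => ?_
    have : (‖deriv h y‖₊ : ℝ) ≤ (C.toNNReal : ℝ) := by
      rw [coe_nnnorm, Real.norm_eq_abs, Real.coe_toNNReal _ hC0]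
      exact hC y
    exact_mod_cast this
  have hLipH : ∀ s t : ℝ, |h s - h t| ≤ C * |s - t| := by
    intro s t
    have := hlipW.dist_le_mul s t
    rwa [Real.dist_eq, Real.dist_eq, Real.coe_toNNReal _ hC0] at this
  have hcont : Continuous h := hdiff.continuous
  set f : ℝ → ℝ := fun t => h t - gaussMean ψ h with hf
  have hfc : Continuous f := by rw [hf]; continuity
  have hLip : ∀ s t : ℝ, |f s - f t| ≤ C * |s - t| := by
    intro s t
    rw [hf]
    simpa using hLipH s t
  have hzero : (∫ t, Real.exp (-(a * t ^ 2 / 2)) * f t) = 0 := by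
    rw [hf, hadef]
    exact zeroMean hψ1 hcont hLipH
  have hint : Integrable (fun t => Real.exp (-(a * t ^ 2 / 2)) * f t) := int_wf ha hfc hLip
  have hsY : steinSol ψ h = Y a f := rfl
  have hbound : 2 / Real.sqrt a * C ≤ 4 / Real.sqrt a * C := by
    have h24 : 2 / Real.sqrt a ≤ 4 / Real.sqrt a := by
      rw [div_eq_mul_inv, div_eq_mul_inv]
      exact mul_le_mul_of_nonneg_right (by norm_num) (by positivity)
    exact mul_le_mul_of_nonneg_right h24 hC0
  rcases le_or_gt 0 x with hx | hx
  · have hD := hasDerivAt_Y hfc hint x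
    rw [hsY, hD.deriv]
    exact le_trans (key ha hfc hLip hzero hx) hbound
  · -- reflection
    set g : ℝ → ℝ := fun t => f (-t) with hg
    have hgc : Continuous g := hfc.comp continuous_neg
    have hLipg : ∀ s t : ℝ, |g s - g t| ≤ C * |s - t| := by
      intro s t
      rw [hg]
      calc |f (-s) - f (-t)| ≤ C * |(-s) - (-t)| := hLip _ _
        _ = C * |s - t| := by rw [show (-s) - (-t) = -(s - t) by ring, abs_neg]
    have hzerog : (∫ t, Real.exp (-(a * t ^ 2 / 2)) * g t) = 0 := by
      have heven : (fun t => Real.exp (-(a * t ^ 2 / 2)) * g t)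
          = fun t => (fun u => Real.exp (-(a * u ^ 2 / 2)) * f u) (-t) := by
        funext t
        rw [hg]
        simp [neg_sq]
      rw [heven]
      exact (integral_neg_eq_self (fun u => Real.exp (-(a * u ^ 2 / 2)) * f u) volume).trans hzero
    have hintg : Integrable (fun t => Real.exp (-(a * t ^ 2 / 2)) * g t) := int_wf ha hgc hLipg
    -- reflection identity
    have hYrefl : ∀ u : ℝ, Y a f u = - Y a g (-u) := by
      intro u
      have h1 : (∫ t in Ioi (-u), Real.exp (-(a * t ^ 2 / 2)) * g t)
          = ∫ t in Iic u, Real.exp (-(a * t ^ 2 / 2)) * f t := by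
        have h2 : (fun t => Real.exp (-(a * t ^ 2 / 2)) * g t)
            = fun t => (fun s => Real.exp (-(a * s ^ 2 / 2)) * f s) (-t) := by
          funext t
          rw [hg]
          simp [neg_sq]
        have h5 := integral_comp_neg_Ioi (-u) (fun s => Real.exp (-(a * s ^ 2 / 2)) * f s)
        rw [neg_neg] at h5
        rw [h2]
        exact h5
      have h3 : (∫ t in Iic u, Real.exp (-(a * t ^ 2 / 2)) * f t)
          = - ∫ t in Ioi u, Real.exp (-(a * t ^ 2 / 2)) * f t := by
        have h4 := intervalIntegral.integral_Iic_add_Ioi (μ := volume) (b := u)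
          (f := fun t => Real.exp (-(a * t ^ 2 / 2)) * f t) hint.integrableOn hint.integrableOn
        rw [hzero] at h4
        linarith
      rw [Y, Y, h1, h3, neg_sq]
      ring
    have hxpos : 0 ≤ -x := by linarith
    have hD := hasDerivAt_Y hgc hintg (-x)
    set D : ℝ := a * (-x) * Y a g (-x) + g (-x) with hD2
    have hcomp : HasDerivAt (fun u => - Y a g (-u)) D x := by
      have h5 : HasDerivAt (fun u : ℝ => -u) (-1 : ℝ) x := by
        exact (hasDerivAt_id x).neg
      have h6 := hD.comp x h5
      have h7 := h6.neg
      exact h7.congr_deriv (by simp)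
    have hDf : HasDerivAt (Y a f) D x :=
      hcomp.congr_of_eventuallyEq (Filter.Eventually.of_forall fun u => (hYrefl u))
    rw [hsY, hDf.deriv]
    exact le_trans (key ha hgc hLipg hzerog hxpos) hbound

end
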